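/- arXiv:0803.0025 — 3 statements merged into one kernel-verified Lean document; each statement's English description precedes it below -/
import Mathlib

section
/- Suppose n ≥ 2 or τ ≠ 0. If Ψ, Φ ∈ ℂ² ⊗ ℂⁿ satisfy μ_{0,τ}(Ψ,Φ) = 0, where μ_{0,τ}(Ψ,Φ) = P(ΨΦ*) + τQ(ΨΦ*), then Ψ = 0 or Φ = 0. -/
open scoped ComplexConjugate

noncomputable section

/-- `Gl k` models `gl(ℂ² ⊗ ℂᵏ)`, endomorphisms of `ℂ² ⊗ ℂᵏ` in the standard basis. -/
abbrev Gl (k : ℕ) := Matrix (Fin 2 × Fin k) (Fin 2 × Fin k) ℂ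

/-- The rank-one endomorphism `ΨΦ* : Ξ ↦ Ψ⟨Φ,Ξ⟩` of `ℂ² ⊗ ℂᵏ`. -/
def outer (k : ℕ) (Ψ Φ : Fin 2 × Fin k → ℂ) : Gl k :=
  Matrix.of fun x y => Ψ x * conj (Φ y)

/-- Partial trace over the `ℂᵏ`-factor, with values in `gl(ℂ²)`. -/
def ptr2 (k : ℕ) (a : Gl k) : Matrix (Fin 2) (Fin 2) ℂ :=
  Matrix.of fun i i' => ∑ j : Fin k, a (i, j) (i', j)

/-- Partial trace over the `ℂ²`-factor, with values in `gl(ℂᵏ)`. -/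
def ptr1 (k : ℕ) (a : Gl k) : Matrix (Fin k) (Fin k) ℂ :=
  Matrix.of fun j j' => ∑ i : Fin 2, a (i, j) (i, j')

/-- Orthogonal projection of `gl(ℂ²⊗ℂᵏ)` onto `sl(ℂ²) ⊗ ℂ·id` (Frobenius inner product):
`Q(a) = [(1/k)·(tr₂ a − (tr a / 2)·id₂)] ⊗ id_k`. -/
def Qproj (k : ℕ) (a : Gl k) : Gl k :=
  Matrix.of fun x y =>
    (1 / (k : ℂ)) * (ptr2 k a x.1 y.1 - (ptr2 k a).trace / 2 * (if x.1 = y.1 then 1 else 0)) *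
      (if x.2 = y.2 then 1 else 0)

/-- Orthogonal projection of `gl(ℂ²⊗ℂᵏ)` onto `ℂ·id ⊗ sl(ℂᵏ)`. -/
def Rproj (k : ℕ) (a : Gl k) : Gl k :=
  Matrix.of fun x y =>
    (if x.1 = y.1 then 1 else 0) *
      ((1 / 2 : ℂ) * (ptr1 k a x.2 y.2 - (ptr1 k a).trace / (k : ℂ) * (if x.2 = y.2 then 1 else 0)))

/-- Orthogonal projection of `gl(ℂ²⊗ℂᵏ)` onto `ℂ·id ⊗ ℂ·id`. -/
def Sproj (k : ℕ) (a : Gl k) : Gl k :=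
  Matrix.of fun x y => (a.trace / (2 * (k : ℂ))) * (if x = y then 1 else 0)

/-- Orthogonal projection `P` of `gl(ℂ²⊗ℂᵏ)` onto `sl(ℂ²) ⊗ sl(ℂᵏ)`. -/
def Pproj (k : ℕ) (a : Gl k) : Gl k := a - Qproj k a - Rproj k a - Sproj k a

/-- The bilinear map `μ_{0,τ}(Ψ,Φ) = P(ΨΦ*) + τ·Q(ΨΦ*)`. -/
def muBil (k : ℕ) (τ : ℝ) (Ψ Φ : Fin 2 × Fin k → ℂ) : Gl k :=
  Pproj k (outer k Ψ Φ) + (τ : ℂ) • Qproj k (outer k Ψ Φ)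

/-- The quadratic map `μ_{0,τ}(Ψ) = μ_{0,τ}(Ψ,Ψ)`. -/
def muQ (k : ℕ) (τ : ℝ) (Ψ : Fin 2 × Fin k → ℂ) : Gl k := muBil k τ Ψ Ψ

/-- Squared Frobenius norm of a matrix. -/
def frobSq {α β : Type*} [Fintype α] [Fintype β] (M : Matrix α β ℂ) : ℝ :=
  ∑ x, ∑ y, ‖M x y‖ ^ 2

/-- Frobenius norm of a matrix. -/
def frobNorm {α β : Type*} [Fintype α] [Fintype β] (M : Matrix α β ℂ) : ℝ :=
  Real.sqrt (frobSq M)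

/-- Squared Hermitian norm `|Ψ|²` of a vector. -/
def vnormSq {α : Type*} [Fintype α] (Ψ : α → ℂ) : ℝ := ∑ x, ‖Ψ x‖ ^ 2

theorem keyAux (n : ℕ) (τ : ℝ) (Ψ Φ : Fin 2 × Fin n → ℂ) (hzero : muBil n τ Ψ Φ = 0)
    (i i' : Fin 2) (j j' : Fin n) :
    Ψ (i, j) * conj (Φ (i', j')) =
      (1 - (τ : ℂ)) * (1 / (n : ℂ) *
          ((∑ x : Fin n, Ψ (i, x) * conj (Φ (i', x))) -
            (∑ x : Fin 2, ∑ y : Fin n, Ψ (x, y) * conj (Φ (x, y))) / 2 *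
              (if i = i' then 1 else 0)) * (if j = j' then 1 else 0))
      + (if i = i' then 1 else 0) * (1 / 2 *
          ((∑ x : Fin 2, Ψ (x, j) * conj (Φ (x, j'))) -
            (∑ x : Fin n, ∑ y : Fin 2, Ψ (y, x) * conj (Φ (y, x))) / (n : ℂ) *
              (if j = j' then 1 else 0)))
      + (∑ x : Fin 2, ∑ y : Fin n, Ψ (x, y) * conj (Φ (x, y))) / (2 * (n : ℂ)) *
          (if i = i' ∧ j = j' then 1 else 0) := by
  have H := congrFun (congrFun hzero (i, j)) (i', j')
  simp only [muBil, Pproj, Qproj, Rproj, Sproj, outer, ptr2, ptr1, Matrix.trace, Matrix.diag,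
    Matrix.of_apply, Matrix.add_apply, Matrix.sub_apply, Matrix.smul_apply, smul_eq_mul,
    Matrix.zero_apply, Fintype.sum_prod_type, Prod.mk.injEq] at H
  linear_combination H

/-- `μ_{0,τ}` has no zero divisors: if `n ≥ 2` or `τ ≠ 0` (with `τ ∈ [0,1]`) and
`μ_{0,τ}(Ψ,Φ) = 0`, then `Ψ = 0` or `Φ = 0`. -/
theorem stmt_5 (n : ℕ) (τ : ℝ) (hτ : τ ∈ Set.Icc (0 : ℝ) 1) (h : 2 ≤ n ∨ τ ≠ 0)
    (Ψ Φ : Fin 2 × Fin n → ℂ) (hzero : muBil n τ Ψ Φ = 0) :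
    Ψ = 0 ∨ Φ = 0 := by
  classical
  by_cases hΨ0 : Ψ = 0
  · exact Or.inl hΨ0
  by_cases hΦ0 : Φ = 0
  · exact Or.inr hΦ0
  exfalso
  obtain ⟨⟨i₀, j₀⟩, hx0⟩ := Function.ne_iff.mp hΨ0
  obtain ⟨⟨i₁, j₁⟩, hy1⟩ := Function.ne_iff.mp hΦ0
  simp only [Pi.zero_apply] at hx0 hy1
  by_cases hn : 2 ≤ n
  · -- main case n ≥ 2
    have exne : ∀ j : Fin n, ∃ j', j' ≠ j := by
      intro j
      refine Fintype.exists_ne_of_one_lt_card ?_ j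
      rw [Fintype.card_fin]; exact hn
    have hex2 : ∀ i : Fin 2, ∃ i', i' ≠ i := by decide
    have E1 : ∀ (i i' : Fin 2) (j j' : Fin n), i ≠ i' → j ≠ j' →
        Ψ (i, j) * conj (Φ (i', j')) = 0 := by
      intro i i' j j' hii hjj
      have H := keyAux n τ Ψ Φ hzero i i' j j'
      rw [if_neg hii, if_neg hjj, if_neg (fun hc => hii hc.1)] at H
      linear_combination H
    have E2 : ∀ (i i' : Fin 2) (j : Fin n), i ≠ i' →
        Ψ (i, j) * conj (Φ (i', j)) =
          (1 - (τ : ℂ)) * (1 / (n : ℂ) * (∑ x : Fin n, Ψ (i, x) * conj (Φ (i', x)))) := by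
      intro i i' j hii
      have H := keyAux n τ Ψ Φ hzero i i' j j
      rw [if_neg hii, if_pos rfl, if_neg (fun hc => hii hc.1)] at H
      linear_combination H
    have E3 : ∀ (i : Fin 2) (j j' : Fin n), j ≠ j' →
        Ψ (i, j) * conj (Φ (i, j')) =
          1 / 2 * (∑ x : Fin 2, Ψ (x, j) * conj (Φ (x, j'))) := by
      intro i j j' hjj
      have H := keyAux n τ Ψ Φ hzero i i j j'
      rw [if_pos rfl, if_neg hjj, if_neg (fun hc => hjj hc.2)] at H
      linear_combination H
    have E4 : ∀ (i : Fin 2) (j : Fin n),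
        Ψ (i, j) * conj (Φ (i, j)) =
          (1 - (τ : ℂ)) * (1 / (n : ℂ) * ((∑ x : Fin n, Ψ (i, x) * conj (Φ (i, x)))
              - (∑ x : Fin 2, ∑ y : Fin n, Ψ (x, y) * conj (Φ (x, y))) / 2))
            + 1 / 2 * ((∑ x : Fin 2, Ψ (x, j) * conj (Φ (x, j)))
              - (∑ x : Fin n, ∑ y : Fin 2, Ψ (y, x) * conj (Φ (y, x))) / (n : ℂ))
            + (∑ x : Fin 2, ∑ y : Fin n, Ψ (x, y) * conj (Φ (x, y))) / (2 * (n : ℂ)) := by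
      intro i j
      have H := keyAux n τ Ψ Φ hzero i i j j
      rw [if_pos rfl, if_pos rfl, if_pos ⟨rfl, rfl⟩] at H
      linear_combination H
    -- same-column entries with i ≠ i' vanish
    have colzero : ∀ (i i' : Fin 2) (j : Fin n), i ≠ i' →
        Ψ (i, j) * conj (Φ (i', j)) = 0 := by
      intro i i' j hii
      obtain ⟨j', hj'⟩ := exne j
      have hA := E2 i i' j hii
      have hB := E2 i i' j' hii
      have hab := hA.trans hB.symm
      have hprod : (Ψ (i, j) * conj (Φ (i', j))) * (Ψ (i, j') * conj (Φ (i', j'))) = 0 := by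
        linear_combination (Ψ (i, j') * conj (Φ (i', j))) * E1 i i' j j' hii (fun e => hj' e.symm)
      have haa : (Ψ (i, j) * conj (Φ (i', j))) * (Ψ (i, j) * conj (Φ (i', j))) = 0 := by
        nth_rewrite 2 [hab]
        exact hprod
      exact mul_self_eq_zero.mp haa
    have Efull : ∀ (i i' : Fin 2) (j j' : Fin n), i ≠ i' →
        Ψ (i, j) * conj (Φ (i', j')) = 0 := by
      intro i i' j j' hii
      by_cases hjj : j = j'
      · subst hjj; exact colzero i i' j hii
      · exact E1 i i' j j' hii hjj
    have rowΦ : ∀ (i' : Fin 2) (j' : Fin n), i' ≠ i₀ → Φ (i', j') = 0 := by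
      intro i' j' hi
      have H := Efull i₀ i' j₀ j' (fun e => hi e.symm)
      rcases mul_eq_zero.mp H with h1 | h2
      · exact absurd h1 hx0
      · simpa using h2
    have hii₁ : i₁ = i₀ := by
      by_contra hne
      exact hy1 (rowΦ i₁ j₁ hne)
    have hy0 : Φ (i₀, j₁) ≠ 0 := hii₁ ▸ hy1
    have hyc : conj (Φ (i₀, j₁)) ≠ 0 := by
      intro hc
      exact hy0 (by simpa using hc)
    have rowΨ : ∀ (i : Fin 2) (j : Fin n), i ≠ i₀ → Ψ (i, j) = 0 := by
      intro i j hi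
      have H := Efull i i₀ j j₁ hi
      rcases mul_eq_zero.mp H with h1 | h2
      · exact h1
      · exact absurd h2 hyc
    obtain ⟨i₂, hi₂⟩ := hex2 i₀
    have offd : ∀ (j j' : Fin n), j ≠ j' → Ψ (i₀, j) * conj (Φ (i₀, j')) = 0 := by
      intro j j' hjj
      have h1 := E3 i₀ j j' hjj
      have h2 := E3 i₂ j j' hjj
      have hz : Ψ (i₂, j) * conj (Φ (i₂, j')) = 0 := by
        rw [rowΨ i₂ j hi₂, zero_mul]
      linear_combination h1 - h2 + hz
    have hconst : ∀ (j j' : Fin n),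
        Ψ (i₀, j) * conj (Φ (i₀, j)) = Ψ (i₀, j') * conj (Φ (i₀, j')) := by
      intro j j'
      linear_combination E4 i₀ j - E4 i₂ j - E4 i₀ j' + E4 i₂ j'
        + conj (Φ (i₂, j)) * rowΨ i₂ j hi₂ - conj (Φ (i₂, j')) * rowΨ i₂ j' hi₂
    have diag0 : Ψ (i₀, j₀) * conj (Φ (i₀, j₀)) = 0 := by
      obtain ⟨j', hj'⟩ := exne j₀
      have hab := hconst j₀ j'
      have hprod : (Ψ (i₀, j₀) * conj (Φ (i₀, j₀))) * (Ψ (i₀, j') * conj (Φ (i₀, j'))) = 0 := by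
        linear_combination (Ψ (i₀, j') * conj (Φ (i₀, j₀))) * offd j₀ j' (fun e => hj' e.symm)
      have haa : (Ψ (i₀, j₀) * conj (Φ (i₀, j₀))) * (Ψ (i₀, j₀) * conj (Φ (i₀, j₀))) = 0 := by
        nth_rewrite 2 [hab]
        exact hprod
      exact mul_self_eq_zero.mp haa
    have hfinal : Ψ (i₀, j₀) * conj (Φ (i₀, j₁)) = 0 := by
      by_cases hj : j₁ = j₀
      · subst hj; exact diag0
      · exact offd j₀ j₁ (fun e => hj e.symm)
    rcases mul_eq_zero.mp hfinal with h1 | h2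
    · exact hx0 h1
    · exact hyc h2
  · -- n ≤ 1
    have hτ0 : τ ≠ 0 := h.resolve_left hn
    have hτC : (τ : ℂ) ≠ 0 := Complex.ofReal_ne_zero.mpr hτ0
    have hn01 : n = 0 ∨ n = 1 := by omega
    rcases hn01 with rfl | rfl
    · exact j₀.elim0
    · have hj0 : j₀ = 0 := Subsingleton.elim _ _
      have hj1 : j₁ = 0 := Subsingleton.elim _ _
      rw [hj0] at hx0
      rw [hj1] at hy1
      have K := fun (i i' : Fin 2) => keyAux 1 τ Ψ Φ hzero i i' 0 0
      simp only [Fin.sum_univ_one, Fin.sum_univ_two, Nat.cast_one, eq_self_iff_true,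
        if_true, and_true] at K
      have hK01 := K 0 1
      rw [if_neg (by decide : ¬(0 : Fin 2) = 1)] at hK01
      have hK10 := K 1 0
      rw [if_neg (by decide : ¬(1 : Fin 2) = 0)] at hK10
      have hK00 := K 0 0
      rw [if_pos rfl] at hK00
      have hK11 := K 1 1
      rw [if_pos rfl] at hK11
      have h01 : Ψ (0, 0) * conj (Φ (1, 0)) = 0 := by
        have hτa : (τ : ℂ) * (Ψ (0, 0) * conj (Φ (1, 0))) = 0 := by linear_combination hK01
        exact (mul_eq_zero.mp hτa).resolve_left hτC
      have h10 : Ψ (1, 0) * conj (Φ (0, 0)) = 0 := by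
        have hτa : (τ : ℂ) * (Ψ (1, 0) * conj (Φ (0, 0))) = 0 := by linear_combination hK10
        exact (mul_eq_zero.mp hτa).resolve_left hτC
      have heq : Ψ (0, 0) * conj (Φ (0, 0)) = Ψ (1, 0) * conj (Φ (1, 0)) := by
        have hτa : (τ : ℂ) * (Ψ (0, 0) * conj (Φ (0, 0)) - Ψ (1, 0) * conj (Φ (1, 0))) = 0 := by
          linear_combination 2 * hK00
        have := (mul_eq_zero.mp hτa).resolve_left hτC
        linear_combination this
      have hprod : (Ψ (0, 0) * conj (Φ (0, 0))) * (Ψ (1, 0) * conj (Φ (1, 0))) = 0 := by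
        linear_combination (Ψ (1, 0) * conj (Φ (0, 0))) * h01
      have haa : (Ψ (0, 0) * conj (Φ (0, 0))) * (Ψ (0, 0) * conj (Φ (0, 0))) = 0 := by
        nth_rewrite 2 [heq]
        exact hprod
      have h00 : Ψ (0, 0) * conj (Φ (0, 0)) = 0 := mul_self_eq_zero.mp haa
      have h11 : Ψ (1, 0) * conj (Φ (1, 0)) = 0 := by rw [← heq]; exact h00
      have hfin : ∀ i i' : Fin 2, Ψ (i, 0) * conj (Φ (i', 0)) = 0 := by
        intro i i'
        fin_cases i <;> fin_cases i' <;> assumption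
      rcases mul_eq_zero.mp (hfin i₀ i₁) with h1 | h2
      · exact hx0 h1
      · exact hy1 (by simpa using h2)
end
end

section
/- Suppose μ : V × V → W is a complex-bilinear (or sesquilinear) map without zero divisors, i.e. μ(Ψ,Φ) = 0 implies Ψ = 0 or Φ = 0. Let X be a connected topological space and Ψ₁, Ψ₂ : X → V continuous functions such that μ(Ψ₁(x), Ψ₂(x)) = 0 for all x, and suppose each Ψᵢ satisfies the unique continuation property (if it vanishes on a nonempty open set it vanishes identically). Then Ψ₁ ≡ 0 or Ψ₂ ≡ 0. -/
noncomputable section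

/-- Let `μ : V × V → W` be a bilinear map without zero divisors, `X` a connected space and
`Ψ₁, Ψ₂ : X → V` continuous with `μ(Ψ₁(x), Ψ₂(x)) = 0` for all `x`.  If each `Ψᵢ` has the
unique continuation property (vanishing on a nonempty open set forces identical vanishing),
then `Ψ₁ ≡ 0` or `Ψ₂ ≡ 0`. -/
theorem stmt_17 {V W : Type*} [NormedAddCommGroup V] [NormedSpace ℂ V]
    [AddCommGroup W] [Module ℂ W] (μ : V →ₗ[ℂ] V →ₗ[ℂ] W)
    (hnzd : ∀ Ψ Φ : V, μ Ψ Φ = 0 → Ψ = 0 ∨ Φ = 0)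
    {X : Type*} [TopologicalSpace X] [ConnectedSpace X]
    (Ψ₁ Ψ₂ : X → V) (hc₁ : Continuous Ψ₁) (hc₂ : Continuous Ψ₂)
    (hμ : ∀ x : X, μ (Ψ₁ x) (Ψ₂ x) = 0)
    (hucp₁ : ∀ U : Set X, IsOpen U → U.Nonempty → (∀ x ∈ U, Ψ₁ x = 0) → ∀ x, Ψ₁ x = 0)
    (hucp₂ : ∀ U : Set X, IsOpen U → U.Nonempty → (∀ x ∈ U, Ψ₂ x = 0) → ∀ x, Ψ₂ x = 0) :
    (∀ x, Ψ₁ x = 0) ∨ (∀ x, Ψ₂ x = 0) := by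
  by_cases h2 : ∀ x, Ψ₂ x = 0
  · exact Or.inr h2
  · push_neg at h2
    obtain ⟨y, hy⟩ := h2
    left
    refine hucp₁ {x | Ψ₂ x ≠ 0} (isOpen_compl_iff.mpr ?_) ⟨y, hy⟩ ?_
    · exact (isClosed_singleton.preimage hc₂)
    · intro x hx
      rcases hnzd _ _ (hμ x) with h | h
      · exact h
      · exact absurd h hx
end
end

section
/- Let Ψ ∈ ℂ² ⊗ ℂ^N and suppose Ψ ∈ ℂ² ⊗ F for a subspace F ⊆ ℂ^N of dimension n. Then with respect to the orthogonal decomposition ℂ^N = F ⊕ F⊥, the endomorphism μ_{0,0}(Ψ) = P(ΨΨ*) is block diagonal: its F-block equals μ^F_{0,1−n/N}(Ψ) and its F⊥-block equals −(1/N)·tr(μ^F_{0,1}(Ψ))·id_{F⊥}, where μ^F_{0,τ} denotes the map μ_{0,τ} formed inside ℂ² ⊗ F, and the trace is taken in the F-factor. -/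
open scoped ComplexConjugate

noncomputable section

lemma sum_trunc {M : Type*} [AddCommMonoid M] {n N : ℕ} (h : n ≤ N) (f : Fin N → M)
    (hf : ∀ j : Fin N, n ≤ (j : ℕ) → f j = 0) :
    ∑ j : Fin N, f j = ∑ j : Fin n, f (Fin.castLE h j) := by
  have h1 : ∑ j ∈ Finset.univ.map (Fin.castLEEmb h), f j = ∑ j : Fin N, f j := by
    refine Finset.sum_subset (Finset.subset_univ _) fun x _ hx => hf x ?_
    by_contra hlt
    push_neg at hlt
    exact hx (Finset.mem_map.mpr ⟨⟨x, hlt⟩, Finset.mem_univ _, by simp [Fin.castLEEmb]⟩)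
  have h2 : ∑ j ∈ Finset.univ.map (Fin.castLEEmb h), f j = ∑ j : Fin n, f (Fin.castLE h j) :=
    Finset.sum_map _ _ _
  exact h1.symm.trans h2

set_option maxHeartbeats 1600000 in
/-- Let `Ψ ∈ ℂ² ⊗ ℂᴺ` be supported in `ℂ² ⊗ F`, where `F ⊆ ℂᴺ` is the span of the first
`n` coordinates.  Then, with respect to `ℂᴺ = F ⊕ F^⊥`, the endomorphism
`μ_{0,0}(Ψ) = P(ΨΨ*)` is block diagonal; its `F`-block equals `μ^F_{0,1-n/N}(Ψ)` and its
`F^⊥`-block equals `-(1/N)·tr_F(μ^F_{0,1}(Ψ)) ⊗ id_{F^⊥}`, the trace being taken in the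
`F`-factor. -/
theorem stmt_19 (n N : ℕ) (hn : 0 < n) (hnN : n < N) (Ψ : Fin 2 × Fin N → ℂ)
    (hsupp : ∀ (i : Fin 2) (j : Fin N), n ≤ (j : ℕ) → Ψ (i, j) = 0) :
    -- `Ψ'` is `Ψ` viewed as an element of `ℂ² ⊗ F ≅ ℂ² ⊗ ℂⁿ`
    ∀ Ψ' : Fin 2 × Fin n → ℂ, (Ψ' = fun p => Ψ (p.1, Fin.castLE hnN.le p.2)) →
    -- off-diagonal blocks vanish
    (∀ (i i' : Fin 2) (j j' : Fin N), ((j : ℕ) < n ↔ ¬ (j' : ℕ) < n) →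
      muQ N 0 Ψ (i, j) (i', j') = 0) ∧
    -- the `F`-block is `μ^F_{0,1-n/N}(Ψ')`
    (∀ (i i' : Fin 2) (j j' : Fin n),
      muQ N 0 Ψ (i, Fin.castLE hnN.le j) (i', Fin.castLE hnN.le j') =
        muQ n (1 - (n : ℝ) / (N : ℝ)) Ψ' (i, j) (i', j')) ∧
    -- the `F^⊥`-block is `-(1/N)·tr_F(μ^F_{0,1}(Ψ'))·id_{F^⊥}`
    (∀ (i i' : Fin 2) (j j' : Fin N), n ≤ (j : ℕ) → n ≤ (j' : ℕ) →
      muQ N 0 Ψ (i, j) (i', j') =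
        (if j = j' then 1 else 0) *
          (-(1 / (N : ℂ)) * ∑ j'' : Fin n, muQ n 1 Ψ' (i, j'') (i', j''))) := by
  intro Ψ' hΨ'
  subst hΨ'
  have hN0 : (N : ℂ) ≠ 0 := Nat.cast_ne_zero.mpr (by omega)
  have hn0 : (n : ℂ) ≠ 0 := Nat.cast_ne_zero.mpr (by omega)
  have key : ∀ i i' : Fin 2, ∑ x : Fin N, Ψ (i, x) * (starRingEnd ℂ) (Ψ (i', x)) =
      ∑ x : Fin n, Ψ (i, Fin.castLE hnN.le x) * (starRingEnd ℂ) (Ψ (i', Fin.castLE hnN.le x)) :=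
    fun a b => sum_trunc hnN.le _ (fun j hj => by simp [hsupp _ _ hj])
  have key2 : ∑ x : Fin N, ∑ x₁ : Fin 2, Ψ (x₁, x) * (starRingEnd ℂ) (Ψ (x₁, x)) =
      ∑ x : Fin n, ∑ x₁ : Fin 2, Ψ (x₁, Fin.castLE hnN.le x) * (starRingEnd ℂ) (Ψ (x₁, Fin.castLE hnN.le x)) :=
    sum_trunc hnN.le _ (fun j hj => by simp [hsupp _ _ hj])
  have key3 : ∑ x : Fin n, ∑ x₁ : Fin 2, Ψ (x₁, Fin.castLE hnN.le x) * (starRingEnd ℂ) (Ψ (x₁, Fin.castLE hnN.le x)) =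
      ∑ x₁ : Fin 2, ∑ x : Fin n, Ψ (x₁, Fin.castLE hnN.le x) * (starRingEnd ℂ) (Ψ (x₁, Fin.castLE hnN.le x)) :=
    Finset.sum_comm
  refine ⟨?_, ?_, ?_⟩
  · -- off-diagonal blocks vanish
    intro i i' j j' hiff
    have hne : j ≠ j' := by
      intro h
      subst h
      tauto
    rcases lt_or_ge (j : ℕ) n with hjn | hjn
    · have hj' : n ≤ (j' : ℕ) := by
        have := hiff.mp hjn
        omega
      have hz : ∀ x : Fin 2, Ψ (x, j') = 0 := fun x => hsupp x j' hj'
      simp [muQ, muBil, Pproj, Qproj, Rproj, Sproj, outer, ptr1, ptr2, Matrix.trace,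
        Matrix.diag, Matrix.sub_apply, Matrix.add_apply, Matrix.smul_apply, Matrix.of_apply,
        hz, hne, Prod.ext_iff]
    · have hz : ∀ x : Fin 2, Ψ (x, j) = 0 := fun x => hsupp x j hjn
      simp [muQ, muBil, Pproj, Qproj, Rproj, Sproj, outer, ptr1, ptr2, Matrix.trace,
        Matrix.diag, Matrix.sub_apply, Matrix.add_apply, Matrix.smul_apply, Matrix.of_apply,
        hz, hne, Prod.ext_iff]
  · -- the F-block
    intro i i' j j'
    simp only [muQ, muBil, Pproj, Qproj, Rproj, Sproj, outer, ptr1, ptr2, Matrix.trace,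
      Matrix.diag, Matrix.sub_apply, Matrix.add_apply, Matrix.smul_apply, Matrix.of_apply,
      Fintype.sum_prod_type, smul_eq_mul]
    simp only [key, key2, key3, Fin.castLE_inj, Prod.mk.injEq]
    push_cast
    generalize ∑ x : Fin 2, ∑ x₁ : Fin n, Ψ (x, Fin.castLE hnN.le x₁) * (starRingEnd ℂ) (Ψ (x, Fin.castLE hnN.le x₁)) = T
    generalize ∑ x : Fin n, Ψ (i, Fin.castLE hnN.le x) * (starRingEnd ℂ) (Ψ (i', Fin.castLE hnN.le x)) = A
    generalize ∑ x : Fin 2, Ψ (x, Fin.castLE hnN.le j) * (starRingEnd ℂ) (Ψ (x, Fin.castLE hnN.le j')) = p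
    generalize Ψ (i, Fin.castLE hnN.le j) * (starRingEnd ℂ) (Ψ (i', Fin.castLE hnN.le j')) = o
    have hδ : (if i = i' ∧ j = j' then (1:ℂ) else 0) =
        (if i = i' then (1:ℂ) else 0) * (if j = j' then (1:ℂ) else 0) := by
      split_ifs <;> simp_all
    rw [hδ]
    generalize (if i = i' then (1:ℂ) else 0) = d1
    generalize (if j = j' then (1:ℂ) else 0) = d2
    have hni := mul_inv_cancel₀ hn0
    linear_combination ((1/(N:ℂ)) * (A - T/2*d1) * d2) * hni
  · -- the F^⊥-block
    intro i i' j j' hj hj'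
    simp only [muQ, muBil, Pproj, Qproj, Rproj, Sproj, outer, ptr1, ptr2, Matrix.trace,
      Matrix.diag, Matrix.sub_apply, Matrix.add_apply, Matrix.smul_apply, Matrix.of_apply,
      Fintype.sum_prod_type, smul_eq_mul]
    simp only [key, key2, key3, Prod.mk.injEq, hsupp _ _ hj, hsupp _ _ hj', map_zero, zero_mul,
      mul_zero, if_pos rfl, and_true]
    simp only [if_true, Complex.ofReal_zero, Complex.ofReal_one, zero_mul, one_mul,
      mul_sub, mul_add, sub_mul, add_mul,
      Finset.sum_sub_distrib, Finset.sum_add_distrib, ← Finset.mul_sum, Finset.sum_const,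
      Finset.card_univ, Fintype.card_fin, nsmul_eq_mul, key3, Finset.sum_const_zero]
    have hδ : (if i = i' ∧ j = j' then (1:ℂ) else 0) =
        (if i = i' then (1:ℂ) else 0) * (if j = j' then (1:ℂ) else 0) := by
      split_ifs <;> simp_all
    try rw [hδ]
    ring_nf
    simp only [Finset.sum_const, Finset.card_univ, Fintype.card_fin, nsmul_eq_mul,
      ← Finset.sum_mul, ← Finset.mul_sum, key3]
    generalize (if i = i' then (1:ℂ) else 0) = d1
    generalize (if j = j' then (1:ℂ) else 0) = d2
    ring
end
end
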